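/- Suppose a distribution P over (X,U,T,Y(0),Y(1)) satisfies the marginal Γ-selection condition and (Y(1),Y(0)) ⊥ T | (X,U). Then for each t ∈ {0,1}, the Radon–Nikodym derivative of the conditional law of Y(t) given X and T=t with respect to the conditional law of Y(t) given X and T=1−t satisfies 1/Γ ≤ dP_{Y(t)|X,T=t}/dP_{Y(t)|X,T=1−t}(x,y) ≤ Γ for P-almost all (x,y). -/

import Mathlib

open MeasureTheory

private lemma ofReal_mul_ofReal_inv {Γ : ℝ} (hΓ : 0 < Γ) :
    ENNReal.ofReal Γ * ENNReal.ofReal (1 / Γ) = 1 := by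
  rw [← ENNReal.ofReal_mul hΓ.le, mul_one_div, div_self hΓ.ne', ENNReal.ofReal_one]

/-- From `(1/Γ) • μ ≤ ν` deduce `μ ≤ Γ • ν`. -/
private lemma le_smul_of_smul_le {α : Type*} [MeasurableSpace α] {μ ν : Measure α} {Γ : ℝ}
    (hΓ : 0 < Γ) (h : ENNReal.ofReal (1 / Γ) • μ ≤ ν) : μ ≤ ENNReal.ofReal Γ • ν := by
  rw [Measure.le_iff'] at h ⊢
  intro s
  have h1 := h s
  simp only [Measure.smul_apply, smul_eq_mul] at h1 ⊢
  calc μ s = (ENNReal.ofReal Γ * ENNReal.ofReal (1 / Γ)) * μ s := by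
        rw [ofReal_mul_ofReal_inv hΓ, one_mul]
    _ = ENNReal.ofReal Γ * (ENNReal.ofReal (1 / Γ) * μ s) := by rw [mul_assoc]
    _ ≤ ENNReal.ofReal Γ * ν s := mul_le_mul_right h1 _

/-- From `ν ≤ Γ • μ` deduce `(1/Γ) • ν ≤ μ`. -/
private lemma smul_le_of_le_smul {α : Type*} [MeasurableSpace α] {μ ν : Measure α} {Γ : ℝ}
    (hΓ : 0 < Γ) (h : ν ≤ ENNReal.ofReal Γ • μ) : ENNReal.ofReal (1 / Γ) • ν ≤ μ := by
  rw [Measure.le_iff'] at h ⊢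
  intro s
  have h1 := h s
  simp only [Measure.smul_apply, smul_eq_mul] at h1 ⊢
  calc ENNReal.ofReal (1 / Γ) * ν s ≤ ENNReal.ofReal (1 / Γ) * (ENNReal.ofReal Γ * μ s) :=
        mul_le_mul_right h1 _
    _ = (ENNReal.ofReal Γ * ENNReal.ofReal (1 / Γ)) * μ s := by ring
    _ = μ s := by rw [ofReal_mul_ofReal_inv hΓ, one_mul]

/-- `Measure.bind_apply` for an a.e.-measurable kernel. -/
private lemma bind_apply_aemeasurable {α β : Type*} [MeasurableSpace α] [MeasurableSpace β]
    {m : Measure α} {f : α → Measure β} {s : Set β} (hs : MeasurableSet s)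
    (hf : AEMeasurable f m) : m.bind f s = ∫⁻ a, f a s ∂m := by
  rw [Measure.bind, Measure.join_apply hs,
    lintegral_map' (Measure.measurable_coe hs).aemeasurable hf]

/-- Key lemma: if `(1/Γ) • μ ≤ ν ≤ Γ • μ` for finite measures, then the Radon–Nikodym
derivative of `ν` with respect to `μ` lies in `[1/Γ, Γ]` a.e. `μ`. -/
private lemma rnDeriv_bounds_of_smul_le {α : Type*} [MeasurableSpace α] {μ ν : Measure α}
    [IsFiniteMeasure μ] [IsFiniteMeasure ν] {Γ : ℝ} (hΓ : 1 ≤ Γ)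
    (h1 : ENNReal.ofReal (1 / Γ) • μ ≤ ν) (h2 : ν ≤ ENNReal.ofReal Γ • μ) :
    ∀ᵐ y ∂μ, 1 / Γ ≤ (ν.rnDeriv μ y).toReal ∧ (ν.rnDeriv μ y).toReal ≤ Γ := by
  have hΓ0 : (0 : ℝ) < Γ := lt_of_lt_of_le one_pos hΓ
  have hac : ν ≪ μ := (Measure.absolutelyContinuous_of_le h2).trans Measure.smul_absolutelyContinuous
  have hupper : ν.rnDeriv μ ≤ᵐ[μ] fun _ => ENNReal.ofReal Γ := by
    refine ae_le_of_forall_setLIntegral_le_of_sigmaFinite (ν.measurable_rnDeriv μ)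
      fun s hs _ => ?_
    rw [Measure.setLIntegral_rnDeriv' hac hs, setLIntegral_const]
    have := Measure.le_iff'.mp h2 s
    simpa [Measure.smul_apply, smul_eq_mul] using this
  have hlower : (fun _ => ENNReal.ofReal (1 / Γ)) ≤ᵐ[μ] ν.rnDeriv μ := by
    refine ae_le_of_forall_setLIntegral_le_of_sigmaFinite measurable_const fun s hs _ => ?_
    rw [Measure.setLIntegral_rnDeriv' hac hs, setLIntegral_const]
    have := Measure.le_iff'.mp h1 s
    simpa [Measure.smul_apply, smul_eq_mul] using this
  filter_upwards [hupper, hlower] with y hu hl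
  have hne : ν.rnDeriv μ y ≠ ⊤ := ne_top_of_le_ne_top ENNReal.ofReal_ne_top hu
  constructor
  · have := ENNReal.toReal_mono hne hl
    rwa [ENNReal.toReal_ofReal (by positivity)] at this
  · exact ENNReal.toReal_le_of_le_ofReal hΓ0.le hu

theorem conditional_counterfactual_rnDeriv_bounds
    {𝒳 𝒰 : Type*} [MeasurableSpace 𝒳] [MeasurableSpace 𝒰]
    (μX : Measure 𝒳) [IsProbabilityMeasure μX]
    (ν : 𝒳 → Bool → Measure 𝒰)          -- conditional law of U given X = x, T = w
    (hν : ∀ x w, IsProbabilityMeasure (ν x w))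
    (ρ : Bool → 𝒳 → 𝒰 → Measure ℝ)      -- conditional law of Y(t) given X = x, U = u
    (hρ : ∀ t x u, IsProbabilityMeasure (ρ t x u))
    (lawY : Bool → Bool → 𝒳 → Measure ℝ) -- lawY t w x = law of Y(t) given X = x, T = w
    (e : 𝒳 → 𝒰 → ℝ)                      -- e x u = P(T = 1 | X = x, U = u)
    (eX : 𝒳 → ℝ)                         -- eX x = P(T = 1 | X = x)
    (Γ : ℝ) (hΓ : 1 ≤ Γ)
    (he : ∀ x u, 0 < e x u ∧ e x u < 1)
    (heX : ∀ x, 0 < eX x ∧ eX x < 1)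
    -- unconfoundedness (Y(1), Y(0)) ⟂ T | (X, U): the conditional law of Y(t) given
    -- (X, U) does not depend on T, and mixing over U | X, T = w gives lawY t w x
    (hmix : ∀ t w x, lawY t w x = (ν x w).bind (ρ t x))
    -- Bayes rule for the conditional laws of the confounder
    (hbayes : ∀ᵐ x ∂μX, ν x true
      = (ν x false).withDensity (fun u =>
          ENNReal.ofReal ((e x u / (1 - e x u)) * ((1 - eX x) / eX x))))
    -- marginal Γ-selection condition
    (hsel : ∀ᵐ x ∂μX, ∀ᵐ u ∂(ν x false),
      1 / Γ ≤ (e x u / (1 - e x u)) / (eX x / (1 - eX x)) ∧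
        (e x u / (1 - e x u)) / (eX x / (1 - eX x)) ≤ Γ) :
    ∀ t : Bool, ∀ᵐ x ∂μX, ∀ᵐ y ∂(lawY t (!t) x),
      1 / Γ ≤ ((lawY t t x).rnDeriv (lawY t (!t) x) y).toReal ∧
        ((lawY t t x).rnDeriv (lawY t (!t) x) y).toReal ≤ Γ := by
  have hΓ0 : (0 : ℝ) < Γ := lt_of_lt_of_le one_pos hΓ
  intro t
  filter_upwards [hbayes, hsel] with x hb hs
  -- density bounds
  set f : 𝒰 → ENNReal :=
    fun u => ENNReal.ofReal ((e x u / (1 - e x u)) * ((1 - eX x) / eX x)) with hf_def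
  have heq : ∀ u, (e x u / (1 - e x u)) * ((1 - eX x) / eX x)
      = (e x u / (1 - e x u)) / (eX x / (1 - eX x)) := by
    intro u
    rw [div_div_eq_mul_div, mul_div_assoc]
  have hf : ∀ᵐ u ∂(ν x false), ENNReal.ofReal (1 / Γ) ≤ f u ∧ f u ≤ ENNReal.ofReal Γ := by
    filter_upwards [hs] with u hu
    constructor
    · exact ENNReal.ofReal_le_ofReal (by rw [heq u]; exact hu.1)
    · exact ENNReal.ofReal_le_ofReal (by rw [heq u]; exact hu.2)
  -- measure bounds on the conditional laws of U
  have hν2 : ν x true ≤ ENNReal.ofReal Γ • ν x false := by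
    rw [Measure.le_iff]
    intro s hms
    rw [hb, withDensity_apply _ hms, Measure.smul_apply, smul_eq_mul]
    calc ∫⁻ u in s, f u ∂(ν x false) ≤ ∫⁻ _ in s, ENNReal.ofReal Γ ∂(ν x false) :=
          lintegral_mono_ae (ae_restrict_of_ae (hf.mono fun u hu => hu.2))
      _ = ENNReal.ofReal Γ * (ν x false) s := setLIntegral_const _ _
  have hν1 : ENNReal.ofReal (1 / Γ) • ν x false ≤ ν x true := by
    rw [Measure.le_iff]
    intro s hms
    rw [hb, withDensity_apply _ hms, Measure.smul_apply, smul_eq_mul]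
    calc ENNReal.ofReal (1 / Γ) * (ν x false) s
        = ∫⁻ _ in s, ENNReal.ofReal (1 / Γ) ∂(ν x false) := (setLIntegral_const _ _).symm
      _ ≤ ∫⁻ u in s, f u ∂(ν x false) :=
          lintegral_mono_ae (ae_restrict_of_ae (hf.mono fun u hu => hu.1))
  -- case split on a.e.-measurability of the kernel
  by_cases hme : AEMeasurable (ρ t x) (ν x (!t))
  · -- the kernel is a.e. measurable w.r.t. both conditional laws
    have hac_tf : ν x true ≪ ν x false :=
      hb ▸ withDensity_absolutelyContinuous (ν x false) f
    have hac_ft : ν x false ≪ ν x true :=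
      (Measure.absolutelyContinuous_of_le (le_smul_of_smul_le hΓ0 hν1)).trans
        Measure.smul_absolutelyContinuous
    have hmf : AEMeasurable (ρ t x) (ν x false) := by
      cases t with
      | false => exact hme.mono_ac hac_ft
      | true => exact hme
    have hmt : AEMeasurable (ρ t x) (ν x true) := by
      cases t with
      | false => exact hme
      | true => exact hme.mono_ac hac_tf
    set μ₀ : Measure ℝ := (ν x false).bind (ρ t x) with hμ₀
    set μ₁ : Measure ℝ := (ν x true).bind (ρ t x) with hμ₁
    have hbind : ∀ (w : Bool) s, MeasurableSet s →
        ((ν x w).bind (ρ t x)) s = ∫⁻ u, ρ t x u s ∂(ν x w) := by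
      intro w s hms
      cases w with
      | false => exact bind_apply_aemeasurable hms hmf
      | true => exact bind_apply_aemeasurable hms hmt
    have hprob : ∀ w : Bool, IsProbabilityMeasure ((ν x w).bind (ρ t x)) := by
      intro w
      constructor
      rw [hbind w _ MeasurableSet.univ]
      have : ∀ u, ρ t x u Set.univ = 1 := fun u => (hρ t x u).measure_univ
      simp only [this, lintegral_one]
      exact (hν x w).measure_univ
    haveI h0 : IsProbabilityMeasure μ₀ := hprob false
    haveI h1 : IsProbabilityMeasure μ₁ := hprob true
    have hμle2 : μ₁ ≤ ENNReal.ofReal Γ • μ₀ := by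
      rw [Measure.le_iff]
      intro s hms
      rw [Measure.smul_apply, smul_eq_mul, hμ₀, hμ₁, hbind true s hms, hbind false s hms]
      calc ∫⁻ u, ρ t x u s ∂(ν x true)
          ≤ ∫⁻ u, ρ t x u s ∂(ENNReal.ofReal Γ • ν x false) := lintegral_mono' hν2 le_rfl
        _ = ENNReal.ofReal Γ * ∫⁻ u, ρ t x u s ∂(ν x false) := lintegral_smul_measure _ _
    have hμle1 : ENNReal.ofReal (1 / Γ) • μ₀ ≤ μ₁ := by
      rw [Measure.le_iff]
      intro s hms
      rw [Measure.smul_apply, smul_eq_mul, hμ₀, hμ₁, hbind true s hms, hbind false s hms]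
      calc ENNReal.ofReal (1 / Γ) * ∫⁻ u, ρ t x u s ∂(ν x false)
          = ∫⁻ u, ρ t x u s ∂(ENNReal.ofReal (1 / Γ) • ν x false) :=
            by rw [lintegral_smul_measure, smul_eq_mul]
        _ ≤ ∫⁻ u, ρ t x u s ∂(ν x true) := lintegral_mono' hν1 le_rfl
    cases t with
    | false =>
      -- numerator μ₀, denominator μ₁
      have h1' : ENNReal.ofReal (1 / Γ) • μ₁ ≤ μ₀ := smul_le_of_le_smul hΓ0 hμle2
      have h2' : μ₀ ≤ ENNReal.ofReal Γ • μ₁ := le_smul_of_smul_le hΓ0 hμle1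
      have := rnDeriv_bounds_of_smul_le (μ := μ₁) (ν := μ₀) hΓ h1' h2'
      simpa [hmix, Bool.not_false] using this
    | true =>
      -- numerator μ₁, denominator μ₀
      have := rnDeriv_bounds_of_smul_le (μ := μ₀) (ν := μ₁) hΓ hμle1 hμle2
      simpa [hmix, Bool.not_true] using this
  · -- degenerate case: the bind is the zero measure, the statement holds vacuously
    have hz : lawY t (!t) x = 0 := by
      rw [hmix, Measure.bind, Measure.map_of_not_aemeasurable hme, Measure.join_zero]
    rw [hz]
    simp
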